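/- arXiv:2308.12016 — 5 statements merged into one kernel-verified Lean document; each statement's English description precedes it below -/
import Mathlib

section
/- For real numbers γ > 0, C > 0 and z ∈ ℝ, define h : ℝ → ℝ by h(v) = C·H(v) + (1/(2γ))·(v − z)², where H(v) = 1 if v > 0 and H(v) = 0 if v ≤ 0. Then: (i) if 0 < z ≤ √(2γC), the function h attains its global minimum over ℝ at v = 0; (ii) if z > √(2γC) or z ≤ 0, the function h attains its global minimum over ℝ at v = z. (Closed-form evaluation of the scalar L_{0/1} proximal operator prox_{γC‖(·)₊‖₀}.) -/
/-- Closed-form evaluation of the scalar L_{0/1} proximal operator. -/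
theorem stmt_0 (γ C z : ℝ) (hγ : 0 < γ) (hC : 0 < C)
    (h : ℝ → ℝ)
    (hh : ∀ v : ℝ, h v = C * (if 0 < v then (1 : ℝ) else 0) + (1 / (2 * γ)) * (v - z) ^ 2) :
    ((0 < z ∧ z ≤ Real.sqrt (2 * γ * C)) → ∀ v : ℝ, h 0 ≤ h v) ∧
    ((Real.sqrt (2 * γ * C) < z ∨ z ≤ 0) → ∀ v : ℝ, h z ≤ h v) := by
  have hg : (0:ℝ) < 1 / (2 * γ) := by positivity
  constructor
  · rintro ⟨hz, hzle⟩ v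
    have hz2 : z ^ 2 ≤ 2 * γ * C := by
      have := (Real.le_sqrt hz.le (by positivity)).mp hzle
      linarith
    rw [hh 0, hh v]
    rw [if_neg (lt_irrefl 0)]
    by_cases hv : 0 < v
    · rw [if_pos hv]
      have h1 : (1 / (2 * γ)) * (0 - z) ^ 2 ≤ C := by
        rw [div_mul_eq_mul_div, one_mul, div_le_iff₀ (by positivity)]
        nlinarith
      nlinarith [mul_nonneg hg.le (sq_nonneg (v - z))]
    · rw [if_neg hv]
      push_neg at hv
      have : (0 - z)^2 ≤ (v - z)^2 := by nlinarith
      nlinarith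
  · rintro hcase v
    rw [hh z, hh v]
    rcases hcase with hgt | hle
    · have hz0 : 0 < z := lt_of_le_of_lt (Real.sqrt_nonneg _) hgt
      have hz2 : 2 * γ * C < z ^ 2 := by
        have := (Real.sqrt_lt' hz0).mp hgt
        linarith
      rw [if_pos hz0]
      by_cases hv : 0 < v
      · rw [if_pos hv]
        nlinarith [sq_nonneg (v - z)]
      · rw [if_neg hv]
        push_neg at hv
        have h1 : z ^ 2 ≤ (v - z)^2 := by nlinarith
        have h2 : C ≤ (1 / (2 * γ)) * (v - z)^2 := by
          rw [div_mul_eq_mul_div, one_mul, le_div_iff₀ (by positivity)]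
          nlinarith
        nlinarith
    · rw [if_neg (not_lt.mpr hle)]
      by_cases hv : 0 < v
      · rw [if_pos hv]
        nlinarith [sq_nonneg (v - z)]
      · rw [if_neg hv]
        push_neg at hv
        nlinarith [sq_nonneg (v - z)]
end

section
/- The function J : ℝ^m × ℝ^L × ℝ → ℝ defined by J(w, d, b) = (1/2) wᵀ 𝒦(d) w + C ‖(1 − 𝒜(d)w − b y)₊‖₀ is lower semicontinuous on ℝ^m × ℝ^L × ℝ. -/
open Matrix

/-- `‖v₊‖₀`: the number of strictly positive components of `v`, as a real number. -/
noncomputable def l0pos {m : ℕ} (v : Fin m → ℝ) : ℝ :=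
  ((Finset.univ.filter (fun i => 0 < v i)).card : ℝ)

lemma l0pos_eq_sum {m : ℕ} (C : ℝ) (v : Fin m → ℝ) :
    C * l0pos v = ∑ i : Fin m, (if 0 < v i then C else 0) := by
  rw [l0pos, Finset.sum_ite, Finset.sum_const, Finset.sum_const_zero, add_zero,
    nsmul_eq_mul, mul_comm]

/-- The objective `J(w,d,b) = (1/2) wᵀ𝒦(d)w + C‖(1 − 𝒜(d)w − b y)₊‖₀` is
lower semicontinuous on `ℝ^m × ℝ^L × ℝ`. -/
theorem stmt_3 (m L : ℕ) (hm : 1 ≤ m) (hL : 1 ≤ L)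
    (y : Fin m → ℝ) (hy : ∀ i, y i = 1 ∨ y i = -1)
    (K : Fin L → Matrix (Fin m) (Fin m) ℝ) (hK : ∀ ℓ, (K ℓ).PosDef)
    (C : ℝ) (hC : 0 < C)
    (J : (Fin m → ℝ) × (Fin L → ℝ) × ℝ → ℝ)
    (hJ : ∀ (w : Fin m → ℝ) (d : Fin L → ℝ) (b : ℝ),
      J (w, d, b) =
        (1 / 2) * (w ⬝ᵥ (∑ ℓ, d ℓ • K ℓ).mulVec w) +
        C * l0pos (1 - (Matrix.diagonal y * ∑ ℓ, d ℓ • K ℓ).mulVec w - b • y)) :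
    LowerSemicontinuous J := by
  classical
  set h : (Fin m → ℝ) × (Fin L → ℝ) × ℝ → Fin m → ℝ := fun x =>
    1 - (Matrix.diagonal y * ∑ ℓ, x.2.1 ℓ • K ℓ).mulVec x.1 - x.2.2 • y with hh
  have hhc : ∀ i, Continuous fun x => h x i := by
    intro i
    simp only [hh, Pi.sub_apply, Pi.one_apply, Pi.smul_apply, mulVec, dotProduct,
      Matrix.mul_apply, Matrix.sum_apply, Matrix.smul_apply, smul_eq_mul]
    fun_prop
  have hf : Continuous fun x : (Fin m → ℝ) × (Fin L → ℝ) × ℝ =>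
      (1 / 2) * (x.1 ⬝ᵥ (∑ ℓ, x.2.1 ℓ • K ℓ).mulVec x.1) := by
    simp only [mulVec, dotProduct, Matrix.sum_apply, Matrix.smul_apply, smul_eq_mul]
    fun_prop
  have hJeq : J = fun x =>
      (1 / 2) * (x.1 ⬝ᵥ (∑ ℓ, x.2.1 ℓ • K ℓ).mulVec x.1) +
      ∑ i : Fin m, (if 0 < h x i then C else 0) := by
    funext x
    obtain ⟨w, d, b⟩ := x
    rw [hJ, l0pos_eq_sum]
  rw [hJeq]
  apply LowerSemicontinuous.add hf.lowerSemicontinuous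
  apply lowerSemicontinuous_sum
  intro i _
  have : (fun x : (Fin m → ℝ) × (Fin L → ℝ) × ℝ => if 0 < h x i then C else 0)
      = Set.indicator {x | 0 < h x i} (fun _ => C) := by
    funext x; simp [Set.indicator_apply]
  rw [this]
  exact (isOpen_lt continuous_const (hhc i)).lowerSemicontinuous_indicator hC.le
end

section
/- Let M > 0. The sublevel set S = {(w, d, b) ∈ ℝ^m × Δ × [−M, M] : J(w, d, b) ≤ C·m} is a nonempty compact subset of ℝ^m × ℝ^L × ℝ. -/
open Matrix

lemma l0pos_nonneg {m : ℕ} (v : Fin m → ℝ) : 0 ≤ l0pos v := by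
  unfold l0pos; positivity

lemma l0pos_lsc {m : ℕ} : LowerSemicontinuous (l0pos (m := m)) := by
  intro v t ht
  have h : ∀ᶠ u in nhds v, ∀ i ∈ Finset.univ.filter (fun i => 0 < v i), 0 < u i := by
    rw [Filter.eventually_all_finset]
    intro i hi
    have hv : 0 < v i := (Finset.mem_filter.1 hi).2
    exact (continuous_apply i).continuousAt.eventually (eventually_gt_nhds hv)
  filter_upwards [h] with u hu
  have hsub : (Finset.univ.filter (fun i => 0 < v i)) ⊆
      (Finset.univ.filter (fun i => 0 < u i)) := by
    intro i hi
    exact Finset.mem_filter.2 ⟨Finset.mem_univ i, hu i hi⟩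
  have := Finset.card_le_card hsub
  have : l0pos v ≤ l0pos u := by
    unfold l0pos; exact_mod_cast this
  linarith

lemma dotProduct_sum' {m L : ℕ} (w : Fin m → ℝ) (v : Fin L → Fin m → ℝ) :
    w ⬝ᵥ (∑ ℓ, v ℓ) = ∑ ℓ, w ⬝ᵥ v ℓ := by
  simp only [dotProduct, Finset.sum_apply, Finset.mul_sum]
  rw [Finset.sum_comm]

set_option maxHeartbeats 1000000 in
/-- The sublevel set `S = {(w,d,b) ∈ ℝ^m × Δ × [−M,M] : J(w,d,b) ≤ C·m}` is a nonempty
compact subset of `ℝ^m × ℝ^L × ℝ`. -/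
theorem stmt_4 (m L : ℕ) (hm : 1 ≤ m) (hL : 1 ≤ L)
    (y : Fin m → ℝ) (hy : ∀ i, y i = 1 ∨ y i = -1)
    (K : Fin L → Matrix (Fin m) (Fin m) ℝ) (hK : ∀ ℓ, (K ℓ).PosDef)
    (C : ℝ) (hC : 0 < C)
    (J : (Fin m → ℝ) × (Fin L → ℝ) × ℝ → ℝ)
    (hJ : ∀ (w : Fin m → ℝ) (d : Fin L → ℝ) (b : ℝ),
      J (w, d, b) =
        (1 / 2) * (w ⬝ᵥ (∑ ℓ, d ℓ • K ℓ).mulVec w) +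
        C * l0pos (1 - (Matrix.diagonal y * ∑ ℓ, d ℓ • K ℓ).mulVec w - b • y))
    (M : ℝ) (hM : 0 < M)
    (S : Set ((Fin m → ℝ) × (Fin L → ℝ) × ℝ))
    (hS : S = {p | (∀ ℓ, 0 ≤ p.2.1 ℓ) ∧ (∑ ℓ, p.2.1 ℓ) = 1 ∧
        p.2.2 ∈ Set.Icc (-M) M ∧ J p ≤ C * m}) :
    S.Nonempty ∧ IsCompact S := by
  classical
  haveI : Nonempty (Fin m) := ⟨⟨0, hm⟩⟩
  haveI : Nonempty (Fin L) := ⟨⟨0, hL⟩⟩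
  set Q : (Fin L → ℝ) → (Fin m → ℝ) → ℝ :=
    fun d w => w ⬝ᵥ (∑ ℓ, d ℓ • K ℓ).mulVec w with hQdef
  -- Q as a finite sum of quadratic forms
  have hQsum : ∀ d w, Q d w = ∑ ℓ, d ℓ * (w ⬝ᵥ (K ℓ).mulVec w) := by
    intro d w
    have hmv : (∑ ℓ, d ℓ • K ℓ).mulVec w = ∑ ℓ, (d ℓ • K ℓ).mulVec w :=
      map_sum (Matrix.mulVec.addMonoidHomLeft w) _ _
    rw [hQdef]
    simp only [hmv, dotProduct_sum', Matrix.smul_mulVec, dotProduct_smul, smul_eq_mul]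
  -- positivity of each quadratic form at nonzero vectors
  have hKpos : ∀ ℓ (w : Fin m → ℝ), w ≠ 0 → 0 < w ⬝ᵥ (K ℓ).mulVec w := by
    intro ℓ w hw
    have := (hK ℓ).dotProduct_mulVec_pos hw
    simpa using this
  have hKnonneg : ∀ ℓ (w : Fin m → ℝ), 0 ≤ w ⬝ᵥ (K ℓ).mulVec w := by
    intro ℓ w
    rcases eq_or_ne w 0 with rfl | hw
    · simp
    · exact (hKpos ℓ w hw).le
  -- the simplex point
  set d₁ : Fin L → ℝ := Pi.single (⟨0, hL⟩ : Fin L) 1 with hd₁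
  have hd₁nonneg : ∀ ℓ, 0 ≤ d₁ ℓ := by
    intro ℓ
    rw [hd₁, Pi.single_apply]
    split <;> norm_num
  have hd₁sum : ∑ ℓ, d₁ ℓ = 1 := by
    rw [hd₁]
    simp [Finset.sum_pi_single]
  -- Nonemptiness
  have hne : S.Nonempty := by
    refine ⟨(0, d₁, 0), ?_⟩
    rw [hS]
    refine ⟨hd₁nonneg, hd₁sum, ⟨show -M ≤ (0:ℝ) by linarith, show (0:ℝ) ≤ M by linarith⟩, ?_⟩
    have h0 := hJ 0 d₁ 0
    simp only [Matrix.mulVec_zero, dotProduct_zero, mul_zero, zero_smul, sub_zero] at h0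
    rw [h0]
    have : l0pos (1 : Fin m → ℝ) = (m : ℝ) := by
      unfold l0pos
      simp [zero_lt_one]
    rw [this]
    linarith [mul_nonneg hC.le (Nat.cast_nonneg (α := ℝ) m)]
  -- continuity of Q
  have hQc : Continuous (fun p : (Fin L → ℝ) × (Fin m → ℝ) => Q p.1 p.2) := by
    apply Continuous.dotProduct continuous_snd
    refine Continuous.matrix_mulVec ?_ continuous_snd
    exact continuous_finset_sum _ fun ℓ _ =>
      ((continuous_apply ℓ).comp continuous_fst).smul continuous_const
  -- the simplex is compact and nonempty
  set Δs : Set (Fin L → ℝ) := {d | (∀ ℓ, 0 ≤ d ℓ) ∧ ∑ ℓ, d ℓ = 1} with hΔdef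
  have hΔclosed : IsClosed Δs := by
    have h1 : IsClosed {d : Fin L → ℝ | ∀ ℓ, 0 ≤ d ℓ} := by
      have : {d : Fin L → ℝ | ∀ ℓ, 0 ≤ d ℓ} = ⋂ ℓ, {d | 0 ≤ d ℓ} := by
        ext d; simp [Set.mem_iInter]
      rw [this]
      exact isClosed_iInter fun ℓ => isClosed_le continuous_const (continuous_apply ℓ)
    have h2 : IsClosed {d : Fin L → ℝ | ∑ ℓ, d ℓ = 1} :=
      isClosed_eq (continuous_finset_sum _ fun ℓ _ => continuous_apply ℓ) continuous_const
    have : Δs = {d : Fin L → ℝ | ∀ ℓ, 0 ≤ d ℓ} ∩ {d | ∑ ℓ, d ℓ = 1} := by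
      ext d; simp [hΔdef]
    rw [this]
    exact h1.inter h2
  have hΔsub : Δs ⊆ Metric.closedBall 0 1 := by
    intro d ⟨hd0, hd1⟩
    rw [Metric.mem_closedBall, dist_zero_right]
    rw [pi_norm_le_iff_of_nonneg zero_le_one]
    intro ℓ
    rw [Real.norm_eq_abs, abs_le]
    constructor
    · linarith [hd0 ℓ]
    · calc d ℓ ≤ ∑ j, d j := Finset.single_le_sum (fun j _ => hd0 j) (Finset.mem_univ ℓ)
      _ = 1 := hd1
  have hΔc : IsCompact Δs :=
    (isCompact_closedBall 0 1).of_isClosed_subset hΔclosed hΔsub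
  have hΔne : Δs.Nonempty := ⟨d₁, hd₁nonneg, hd₁sum⟩
  -- the sphere is compact and nonempty
  haveI : Nontrivial (Fin m → ℝ) := Function.nontrivial
  have hsph : IsCompact (Metric.sphere (0 : Fin m → ℝ) 1) := isCompact_sphere _ _
  have hsphne : (Metric.sphere (0 : Fin m → ℝ) 1).Nonempty :=
    NormedSpace.sphere_nonempty.2 zero_le_one
  -- the minimum of Q on Δs × sphere
  obtain ⟨⟨d₀, w₀⟩, hmem, hmin⟩ :=
    (hΔc.prod hsph).exists_isMinOn (hΔne.prod hsphne) hQc.continuousOn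
  obtain ⟨hd₀ : d₀ ∈ Δs, hw₀ : w₀ ∈ Metric.sphere (0 : Fin m → ℝ) 1⟩ := hmem
  set α : ℝ := Q d₀ w₀ with hαdef
  have hw₀ne : w₀ ≠ 0 := by
    intro h
    rw [Metric.mem_sphere, dist_zero_right, h] at hw₀
    simp at hw₀
  have hα : 0 < α := by
    obtain ⟨hd0, hd1⟩ := hd₀
    have hex : ∃ ℓ, (0 : ℝ) < d₀ ℓ := by
      by_contra h
      push_neg at h
      have : ∑ ℓ, d₀ ℓ = 0 :=
        Finset.sum_eq_zero fun ℓ _ => le_antisymm (h ℓ) (hd0 ℓ)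
      rw [hd1] at this; norm_num at this
    obtain ⟨ℓ₀, hℓ₀⟩ := hex
    rw [hαdef, hQsum]
    apply Finset.sum_pos'
    · intro ℓ _
      exact mul_nonneg (hd0 ℓ) (hKnonneg ℓ w₀)
    · exact ⟨ℓ₀, Finset.mem_univ ℓ₀, mul_pos hℓ₀ (hKpos ℓ₀ w₀ hw₀ne)⟩
  -- uniform coercivity
  have hlow : ∀ d ∈ Δs, ∀ w : Fin m → ℝ, α * ‖w‖ ^ 2 ≤ Q d w := by
    intro d hd w
    rcases eq_or_ne w 0 with rfl | hw
    · simp [hQdef]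
    · have hn : 0 < ‖w‖ := norm_pos_iff.2 hw
      set u : Fin m → ℝ := ‖w‖⁻¹ • w with hu_def
      have hu : u ∈ Metric.sphere (0 : Fin m → ℝ) 1 := by
        rw [Metric.mem_sphere, dist_zero_right, hu_def, norm_smul, norm_inv, norm_norm]
        field_simp
      have hmem' : (d, u) ∈ Δs ×ˢ Metric.sphere (0 : Fin m → ℝ) 1 :=
        Set.mem_prod.mpr ⟨hd, hu⟩
      have hQu : α ≤ Q d u := hmin hmem'
      have hwu : ‖w‖ • u = w := by
        rw [hu_def, smul_smul]
        rw [mul_inv_cancel₀ hn.ne', one_smul]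
      have hscale : Q d w = ‖w‖ ^ 2 * Q d u := by
        conv_lhs => rw [← hwu]
        rw [hQdef]
        simp only [Matrix.mulVec_smul, smul_dotProduct, dotProduct_smul, smul_eq_mul]
        ring
      rw [hscale]
      have h2 : 0 ≤ ‖w‖ ^ 2 := sq_nonneg _
      nlinarith
  -- J as an explicit function
  have hJeq : ∀ p : (Fin m → ℝ) × (Fin L → ℝ) × ℝ,
      J p = (1 / 2) * Q p.2.1 p.1 +
        C * l0pos (1 - (Matrix.diagonal y * ∑ ℓ, p.2.1 ℓ • K ℓ).mulVec p.1 - p.2.2 • y) :=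
    fun p => hJ p.1 p.2.1 p.2.2
  -- lower semicontinuity of J
  set G : (Fin m → ℝ) × (Fin L → ℝ) × ℝ → (Fin m → ℝ) :=
    fun p => 1 - (Matrix.diagonal y * ∑ ℓ, p.2.1 ℓ • K ℓ).mulVec p.1 - p.2.2 • y with hGdef
  have hGc : Continuous G := by
    apply Continuous.sub
    · apply Continuous.sub continuous_const
      refine Continuous.matrix_mulVec ?_ continuous_fst
      refine Continuous.matrix_mul continuous_const ?_
      exact continuous_finset_sum _ fun ℓ _ =>
        ((continuous_apply ℓ).comp (continuous_fst.comp continuous_snd)).smul continuous_const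
    · exact (continuous_snd.comp continuous_snd).smul continuous_const
  have hlscJ : LowerSemicontinuous J := by
    have h1 : LowerSemicontinuous (fun p : (Fin m → ℝ) × (Fin L → ℝ) × ℝ =>
        C * l0pos (G p)) := by
      intro p t ht
      replace ht : t < C * l0pos (G p) := ht
      have hlG : LowerSemicontinuous (fun p => l0pos (G p)) :=
        l0pos_lsc.comp hGc
      have ht' : t / C < l0pos (G p) := by
        rw [div_lt_iff₀ hC]
        linarith [mul_comm C (l0pos (G p))]
      filter_upwards [hlG p (t / C) ht'] with z hz
      have := (div_lt_iff₀ hC).1 hz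
      linarith [mul_comm (l0pos (G z)) C]
    have h2 : Continuous (fun p : (Fin m → ℝ) × (Fin L → ℝ) × ℝ =>
        (1 / 2) * Q p.2.1 p.1) := by
      have hpair : Continuous (fun p : (Fin m → ℝ) × (Fin L → ℝ) × ℝ => (p.2.1, p.1)) :=
        (continuous_fst.comp continuous_snd).prodMk continuous_fst
      exact continuous_const.mul (hQc.comp hpair)
    have : J = fun p => (1 / 2) * Q p.2.1 p.1 + C * l0pos (G p) :=
      funext fun p => hJeq p
    rw [this]
    exact h2.lowerSemicontinuous.add h1
  -- S is closed
  have hSclosed : IsClosed S := by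
    rw [hS]
    have hset : {p : (Fin m → ℝ) × (Fin L → ℝ) × ℝ |
        (∀ ℓ, 0 ≤ p.2.1 ℓ) ∧ (∑ ℓ, p.2.1 ℓ) = 1 ∧
          p.2.2 ∈ Set.Icc (-M) M ∧ J p ≤ C * m} =
        (⋂ ℓ, {p : (Fin m → ℝ) × (Fin L → ℝ) × ℝ | 0 ≤ p.2.1 ℓ}) ∩
        ({p | ∑ ℓ, p.2.1 ℓ = 1} ∩
          (((fun p : (Fin m → ℝ) × (Fin L → ℝ) × ℝ => p.2.2) ⁻¹' Set.Icc (-M) M) ∩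
            (J ⁻¹' Set.Iic (C * m)))) := by
      ext p
      simp only [Set.mem_setOf_eq, Set.mem_inter_iff, Set.mem_iInter, Set.mem_preimage,
        Set.mem_Iic]
      try tauto
    rw [hset]
    refine IsClosed.inter ?_ (IsClosed.inter ?_ (IsClosed.inter ?_ ?_))
    · exact isClosed_iInter fun ℓ =>
        isClosed_le continuous_const ((continuous_apply ℓ).comp (continuous_fst.comp continuous_snd))
    · exact isClosed_eq
        (continuous_finset_sum _ fun ℓ _ =>
          (continuous_apply ℓ).comp (continuous_fst.comp continuous_snd))
        continuous_const
    · exact isClosed_Icc.preimage (continuous_snd.comp continuous_snd)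
    · exact hlscJ.isClosed_preimage (C * m)
  -- S is bounded inside a compact box
  set R : ℝ := Real.sqrt (2 * C * m / α) with hRdef
  have hSsub : S ⊆ Metric.closedBall (0 : Fin m → ℝ) R ×ˢ
      (Metric.closedBall (0 : Fin L → ℝ) 1 ×ˢ Set.Icc (-M) M) := by
    intro p hp
    rw [hS] at hp
    obtain ⟨h1, h2, h3, h4⟩ := hp
    refine ⟨?_, ?_, h3⟩
    · -- bound on w
      rw [Metric.mem_closedBall, dist_zero_right]
      have hJp := hJeq p
      have hl0 := l0pos_nonneg
        (1 - (Matrix.diagonal y * ∑ ℓ, p.2.1 ℓ • K ℓ).mulVec p.1 - p.2.2 • y)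
      have hCl0 : 0 ≤ C * l0pos
          (1 - (Matrix.diagonal y * ∑ ℓ, p.2.1 ℓ • K ℓ).mulVec p.1 - p.2.2 • y) :=
        mul_nonneg hC.le hl0
      have hQle : Q p.2.1 p.1 ≤ 2 * C * m := by
        rw [hJp] at h4
        linarith
      have hcoer := hlow p.2.1 ⟨h1, h2⟩ p.1
      have hnorm2 : ‖p.1‖ ^ 2 ≤ 2 * C * m / α := by
        rw [le_div_iff₀ hα]
        nlinarith
      calc ‖p.1‖ = Real.sqrt (‖p.1‖ ^ 2) := (Real.sqrt_sq (norm_nonneg _)).symm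
        _ ≤ R := Real.sqrt_le_sqrt hnorm2
    · exact hΔsub ⟨h1, h2⟩
  have hbig : IsCompact (Metric.closedBall (0 : Fin m → ℝ) R ×ˢ
      (Metric.closedBall (0 : Fin L → ℝ) 1 ×ˢ Set.Icc (-M) M)) :=
    (isCompact_closedBall _ _).prod ((isCompact_closedBall _ _).prod isCompact_Icc)
  exact ⟨hne, hbig.of_isClosed_subset hSclosed hSsub⟩
end

section
/- (Existence of a global minimizer, Theorem 2.) Let M > 0. The optimization problem of minimizing J(w, d, b) over (w, d, b) ∈ ℝ^m × Δ × [−M, M] has a global minimizer, and the set of all global minimizers is a bounded subset of ℝ^m × ℝ^L × ℝ. -/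
open Matrix

/-- A lower semicontinuous real function attains its minimum on a nonempty compact set. -/
lemma lsc_exists_min {X : Type*} [TopologicalSpace X] {f : X → ℝ}
    (hf : LowerSemicontinuous f) {s : Set X} (hs : IsCompact s) (hne : s.Nonempty) :
    ∃ x ∈ s, ∀ y ∈ s, f x ≤ f y := by
  have key := hs.inter_iInter_nonempty (ι := s) (fun y => f ⁻¹' Set.Iic (f (y : X)))
    (fun y => hf.isClosed_preimage _) ?_
  · obtain ⟨x, hxs, hx⟩ := key
    refine ⟨x, hxs, fun y hy => ?_⟩
    have := Set.mem_iInter.1 hx ⟨y, hy⟩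
    simpa using this
  · intro u
    rcases u.eq_empty_or_nonempty with rfl | hu
    · simpa using hne
    · obtain ⟨y0, hy0, hmin⟩ := u.exists_min_image (fun y : s => f (y : X)) hu
      refine ⟨(y0 : X), y0.2, ?_⟩
      simp only [Set.mem_iInter]
      intro y hy
      exact hmin y hy

/-- Positive definite matrices have a coercive quadratic form. -/
lemma posdef_quad_lower {m : ℕ} {A : Matrix (Fin m) (Fin m) ℝ} (hA : A.PosDef) :
    ∃ c > 0, ∀ x : Fin m → ℝ, c * ‖x‖ ^ 2 ≤ x ⬝ᵥ A.mulVec x := by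
  rcases Nat.eq_zero_or_pos m with rfl | hm
  · refine ⟨1, one_pos, fun x => ?_⟩
    have h1 : ‖x‖ = 0 := by
      rw [Subsingleton.elim x (0 : Fin 0 → ℝ)]; exact norm_zero
    simp [dotProduct, h1]
  · haveI : Nonempty (Fin m) := Fin.pos_iff_nonempty.mp hm
    have hcont : Continuous fun x : Fin m → ℝ => x ⬝ᵥ A.mulVec x := by
      simp only [dotProduct, Matrix.mulVec]
      exact continuous_finset_sum _ fun i _ =>
        ((continuous_apply i).mul (continuous_finset_sum _ fun j _ =>
          (continuous_const.mul (continuous_apply j))))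
    have hsphere : IsCompact (Metric.sphere (0 : Fin m → ℝ) 1) := isCompact_sphere 0 1
    have hne : (Metric.sphere (0 : Fin m → ℝ) 1).Nonempty :=
      NormedSpace.sphere_nonempty.mpr zero_le_one
    obtain ⟨u0, hu0, hmin⟩ := hsphere.exists_isMinOn hne hcont.continuousOn
    set c := u0 ⬝ᵥ A.mulVec u0 with hc
    have hu0ne : u0 ≠ 0 := by
      intro h
      rw [h] at hu0
      simp at hu0
    have hcpos : 0 < c := hA.dotProduct_mulVec_pos hu0ne
    refine ⟨c, hcpos, fun x => ?_⟩
    rcases eq_or_ne x 0 with rfl | hx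
    · simp
    · have hnx : (0 : ℝ) < ‖x‖ := norm_pos_iff.mpr hx
      set u := ‖x‖⁻¹ • x with hu
      have hunorm : u ∈ Metric.sphere (0 : Fin m → ℝ) 1 := by
        simp only [hu, mem_sphere_iff_norm, sub_zero, norm_smul, norm_inv, norm_norm]
        field_simp
      have hcle : c ≤ u ⬝ᵥ A.mulVec u := hmin hunorm
      have hxu : x = ‖x‖ • u := by
        rw [hu, smul_smul]
        field_simp
        simp
      have hquad : x ⬝ᵥ A.mulVec x = ‖x‖ ^ 2 * (u ⬝ᵥ A.mulVec u) := by
        conv_lhs => rw [hxu]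
        rw [Matrix.mulVec_smul, smul_dotProduct, dotProduct_smul]
        simp [smul_eq_mul]
        ring
      rw [hquad]
      have h2 : ‖x‖ ^ 2 * c ≤ ‖x‖ ^ 2 * (u ⬝ᵥ A.mulVec u) := by
        apply mul_le_mul_of_nonneg_left hcle (by positivity)
      linarith

lemma lsc_const_mul {X : Type*} [TopologicalSpace X] {f : X → ℝ}
    (hf : LowerSemicontinuous f) {C : ℝ} (hC : 0 < C) :
    LowerSemicontinuous fun x => C * f x := by
  intro x t ht
  have h1 : t / C < f x := (div_lt_iff₀' hC).mpr ht
  filter_upwards [hf x _ h1] with x' h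
  calc t = C * (t / C) := by field_simp
    _ < C * f x' := by exact (mul_lt_mul_iff_right₀ hC).mpr h

lemma sum_mulVec' {m L : ℕ} (A : Fin L → Matrix (Fin m) (Fin m) ℝ) (w : Fin m → ℝ) :
    (∑ ℓ, A ℓ).mulVec w = ∑ ℓ, (A ℓ).mulVec w := by
  ext i
  simp only [Matrix.mulVec, dotProduct, Matrix.sum_apply, Finset.sum_apply,
    Finset.sum_mul]
  exact Finset.sum_comm

/-- Existence of a global minimizer (Theorem 2): the problem of minimizing `J` over
`ℝ^m × Δ × [−M, M]` has a global minimizer, and the set of all global minimizers is bounded. -/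
theorem stmt_5 (m L : ℕ) (hm : 1 ≤ m) (hL : 1 ≤ L)
    (y : Fin m → ℝ) (hy : ∀ i, y i = 1 ∨ y i = -1)
    (K : Fin L → Matrix (Fin m) (Fin m) ℝ) (hK : ∀ ℓ, (K ℓ).PosDef)
    (C : ℝ) (hC : 0 < C)
    (J : (Fin m → ℝ) × (Fin L → ℝ) × ℝ → ℝ)
    (hJ : ∀ (w : Fin m → ℝ) (d : Fin L → ℝ) (b : ℝ),
      J (w, d, b) =
        (1 / 2) * (w ⬝ᵥ (∑ ℓ, d ℓ • K ℓ).mulVec w) +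
        C * l0pos (1 - (Matrix.diagonal y * ∑ ℓ, d ℓ • K ℓ).mulVec w - b • y))
    (M : ℝ) (hM : 0 < M)
    (F : Set ((Fin m → ℝ) × (Fin L → ℝ) × ℝ))
    (hF : F = {p | (∀ ℓ, 0 ≤ p.2.1 ℓ) ∧ (∑ ℓ, p.2.1 ℓ) = 1 ∧ p.2.2 ∈ Set.Icc (-M) M}) :
    (∃ p ∈ F, ∀ q ∈ F, J p ≤ J q) ∧
    Bornology.IsBounded {p | p ∈ F ∧ ∀ q ∈ F, J p ≤ J q} := by
  classical
  haveI : Nonempty (Fin L) := Fin.pos_iff_nonempty.mp hL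
  -- coercivity constants
  choose c hcpos hc using fun ℓ => posdef_quad_lower (hK ℓ)
  set c0 : ℝ := Finset.univ.inf' Finset.univ_nonempty c with hc0
  have hc0pos : 0 < c0 := by
    rw [hc0, Finset.lt_inf'_iff]
    exact fun ℓ _ => hcpos ℓ
  -- lower bound on the quadratic form over the simplex
  have hquad : ∀ (w : Fin m → ℝ) (d : Fin L → ℝ), (∀ ℓ, 0 ≤ d ℓ) → (∑ ℓ, d ℓ) = 1 →
      c0 * ‖w‖ ^ 2 ≤ w ⬝ᵥ (∑ ℓ, d ℓ • K ℓ).mulVec w := by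
    intro w d hd hd1
    have expand : w ⬝ᵥ (∑ ℓ, d ℓ • K ℓ).mulVec w
        = ∑ ℓ, d ℓ * (w ⬝ᵥ (K ℓ).mulVec w) := by
      rw [sum_mulVec', dotProduct_sum']
      congr 1
      ext ℓ
      rw [Matrix.smul_mulVec, dotProduct_smul, smul_eq_mul]
    rw [expand]
    calc c0 * ‖w‖ ^ 2 = ∑ ℓ, d ℓ * (c0 * ‖w‖ ^ 2) := by
          rw [← Finset.sum_mul, hd1, one_mul]
      _ ≤ ∑ ℓ, d ℓ * (w ⬝ᵥ (K ℓ).mulVec w) := by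
          apply Finset.sum_le_sum
          intro ℓ _
          apply mul_le_mul_of_nonneg_left _ (hd ℓ)
          calc c0 * ‖w‖ ^ 2 ≤ c ℓ * ‖w‖ ^ 2 := by
                apply mul_le_mul_of_nonneg_right _ (by positivity)
                exact Finset.inf'_le _ (Finset.mem_univ ℓ)
            _ ≤ w ⬝ᵥ (K ℓ).mulVec w := hc ℓ w
  -- J as a function of p
  have hJ' : ∀ p : (Fin m → ℝ) × (Fin L → ℝ) × ℝ,
      J p = (1 / 2) * (p.1 ⬝ᵥ (∑ ℓ, p.2.1 ℓ • K ℓ).mulVec p.1) +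
        C * l0pos (1 - (Matrix.diagonal y * ∑ ℓ, p.2.1 ℓ • K ℓ).mulVec p.1 - p.2.2 • y) := by
    intro p
    rw [← hJ p.1 p.2.1 p.2.2]
  -- continuity of the two ingredients
  have hcontQ : Continuous fun p : (Fin m → ℝ) × (Fin L → ℝ) × ℝ =>
      (1 / 2) * (p.1 ⬝ᵥ (∑ ℓ, p.2.1 ℓ • K ℓ).mulVec p.1) := by
    apply continuous_const.mul
    simp only [dotProduct, Matrix.mulVec, Matrix.sum_apply, Matrix.smul_apply,
      smul_eq_mul]
    apply continuous_finset_sum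
    intro i _
    apply Continuous.mul (continuous_apply i |>.comp continuous_fst)
    apply continuous_finset_sum
    intro j _
    apply Continuous.mul
    · apply continuous_finset_sum
      intro ℓ _
      exact ((continuous_apply ℓ).comp (continuous_fst.comp continuous_snd)).mul
        continuous_const
    · exact (continuous_apply j).comp continuous_fst
  have hcontG : Continuous fun p : (Fin m → ℝ) × (Fin L → ℝ) × ℝ =>
      (1 - (Matrix.diagonal y * ∑ ℓ, p.2.1 ℓ • K ℓ).mulVec p.1 - p.2.2 • y : Fin m → ℝ) := by
    apply continuous_pi
    intro i
    simp only [Pi.sub_apply, Pi.one_apply, Pi.smul_apply, smul_eq_mul, Matrix.mulVec,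
      dotProduct, Matrix.mul_apply, Matrix.sum_apply, Matrix.smul_apply]
    apply Continuous.sub
    apply Continuous.sub continuous_const
    · apply continuous_finset_sum
      intro j _
      apply Continuous.mul
      · apply continuous_finset_sum
        intro k _
        apply Continuous.mul continuous_const
        apply continuous_finset_sum
        intro ℓ _
        exact ((continuous_apply ℓ).comp (continuous_fst.comp continuous_snd)).mul
          continuous_const
      · exact (continuous_apply j).comp continuous_fst
    · exact ((continuous_snd.comp continuous_snd).mul continuous_const)
  -- J is lower semicontinuous
  have hJlsc : LowerSemicontinuous J := by
    have h1 : LowerSemicontinuous fun p : (Fin m → ℝ) × (Fin L → ℝ) × ℝ =>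
        (1 / 2) * (p.1 ⬝ᵥ (∑ ℓ, p.2.1 ℓ • K ℓ).mulVec p.1) :=
      hcontQ.lowerSemicontinuous
    have h2 : LowerSemicontinuous fun p : (Fin m → ℝ) × (Fin L → ℝ) × ℝ =>
        C * l0pos (1 - (Matrix.diagonal y * ∑ ℓ, p.2.1 ℓ • K ℓ).mulVec p.1 - p.2.2 • y) :=
      lsc_const_mul (l0pos_lsc.comp hcontG) hC
    have := h1.add h2
    convert this using 1
    · rfl
    funext p
    exact hJ' p
  -- the reference point
  set d0 : Fin L → ℝ := fun _ => (L : ℝ)⁻¹ with hd0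
  have hLpos : (0 : ℝ) < L := by exact_mod_cast hL
  have hd0mem : (∀ ℓ, 0 ≤ d0 ℓ) ∧ (∑ ℓ, d0 ℓ) = 1 := by
    constructor
    · intro ℓ; positivity
    · simp [hd0, Finset.sum_const, Finset.card_univ]
      field_simp
  set p0 : (Fin m → ℝ) × (Fin L → ℝ) × ℝ := (0, d0, 0) with hp0
  have hp0F : p0 ∈ F := by
    rw [hF]
    exact ⟨hd0mem.1, hd0mem.2, by constructor <;> simp [hp0] <;> linarith⟩
  set B : ℝ := J p0 with hB
  have hBnonneg : 0 ≤ B := by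
    rw [hB, hJ' p0]
    have : (p0.1 ⬝ᵥ (∑ ℓ, p0.2.1 ℓ • K ℓ).mulVec p0.1) = 0 := by
      simp [hp0]
    rw [this]
    have := l0pos_nonneg (1 - (Matrix.diagonal y * ∑ ℓ, p0.2.1 ℓ • K ℓ).mulVec p0.1
      - p0.2.2 • y)
    nlinarith
  -- the radius
  set R : ℝ := Real.sqrt (2 * B / c0) with hR
  have hRnonneg : 0 ≤ R := Real.sqrt_nonneg _
  -- sublevel w-bound
  have hsub : ∀ p ∈ F, J p ≤ B → ‖p.1‖ ≤ R := by
    intro p hpF hpB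
    rw [hF] at hpF
    obtain ⟨hd, hd1, _⟩ := hpF
    have hq := hquad p.1 p.2.1 hd hd1
    have hl0 := l0pos_nonneg (1 - (Matrix.diagonal y * ∑ ℓ, p.2.1 ℓ • K ℓ).mulVec p.1
      - p.2.2 • y)
    have hJp := hJ' p
    have hkey : c0 * ‖p.1‖ ^ 2 ≤ 2 * B := by nlinarith
    have : ‖p.1‖ ^ 2 ≤ 2 * B / c0 := by
      rw [le_div_iff₀ hc0pos]; linarith [hkey, mul_comm c0 (‖p.1‖ ^ 2)]
    exact Real.le_sqrt_of_sq_le this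
  -- the compact set
  set T : Set ((Fin m → ℝ) × (Fin L → ℝ) × ℝ) :=
    Metric.closedBall 0 R ×ˢ stdSimplex ℝ (Fin L) ×ˢ Set.Icc (-M) M with hT
  have hTcompact : IsCompact T := by
    exact (isCompact_closedBall _ _).prod ((isCompact_stdSimplex (𝕜 := ℝ) (ι := Fin L)).prod isCompact_Icc)
  have hTF : T ⊆ F := by
    intro p hp
    rw [hT] at hp
    obtain ⟨_, ⟨hd, hd1⟩, hb⟩ := hp
    rw [hF]
    exact ⟨hd, hd1, hb⟩
  have hmemT : ∀ p ∈ F, ‖p.1‖ ≤ R → p ∈ T := by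
    intro p hpF hpR
    rw [hF] at hpF
    rw [hT]
    refine ⟨?_, ⟨hpF.1, hpF.2.1⟩, hpF.2.2⟩
    simpa [Metric.mem_closedBall, dist_eq_norm] using hpR
  have hp0T : p0 ∈ T := hmemT p0 hp0F (by simp [hp0, hRnonneg])
  -- minimize over T
  obtain ⟨pm, hpmT, hpmmin⟩ := lsc_exists_min hJlsc hTcompact ⟨p0, hp0T⟩
  have hglobal : ∀ q ∈ F, J pm ≤ J q := by
    intro q hqF
    by_cases hq : J q ≤ B
    · exact hpmmin q (hmemT q hqF (hsub q hqF hq))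
    · calc J pm ≤ J p0 := hpmmin p0 hp0T
        _ = B := hB.symm
        _ ≤ J q := le_of_not_ge hq
  refine ⟨⟨pm, hTF hpmT, hglobal⟩, ?_⟩
  -- boundedness of the set of minimizers
  apply Bornology.IsBounded.subset hTcompact.isBounded
  intro p hp
  obtain ⟨hpF, hpmin⟩ := hp
  have hpB : J p ≤ B := by
    rw [hB]; exact hpmin p0 hp0F
  exact hmemT p hpF (hsub p hpF hpB)
end

section
/- (Theorem 4, part 1: global minimizers are P-stationary.) Let C₁ = min{λ_min(𝒦(d)) : d ∈ Δ} > 0. Suppose (w*, d*, b*) is a global minimizer of J(w, d, b) over (w, d, b) ∈ ℝ^m × Δ × ℝ, and set u* = 1 − 𝒜(d*) w* − b* y. Then for every γ with 0 < γ < C₁, the quadruple (w*, d*, b*, u*) is a P-stationary point with parameter γ. -/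
open Matrix

section Helpers

lemma dot_self_nonneg' {m : ℕ} (x : Fin m → ℝ) : (0:ℝ) ≤ x ⬝ᵥ x :=
  Finset.sum_nonneg fun _ _ => mul_self_nonneg _

/-- Cauchy–Schwarz for dotProduct. -/
lemma dot_cs {m : ℕ} (x z : Fin m → ℝ) : (x ⬝ᵥ z)^2 ≤ (x ⬝ᵥ x) * (z ⬝ᵥ z) := by
  have := Finset.sum_mul_sq_le_sq_mul_sq Finset.univ x z
  simpa [dotProduct, pow_two, Finset.mul_sum] using
    (by simpa [pow_two] using this : (∑ i, x i * z i)^2 ≤ (∑ i, x i * x i) * (∑ i, z i * z i))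

/-- If the quadratic form of `A` is bounded below by `c‖·‖²` and `A q = z`, then
`c * (z ⬝ q) ≤ z ⬝ z`. -/
lemma key_bound {m : ℕ} {A : Matrix (Fin m) (Fin m) ℝ} {c : ℝ} (hc : 0 < c)
    (hb : ∀ x, c * (x ⬝ᵥ x) ≤ x ⬝ᵥ A *ᵥ x) {q z : Fin m → ℝ} (hq : A *ᵥ q = z) :
    c * (z ⬝ᵥ q) ≤ z ⬝ᵥ z := by
  have h1 : c * (q ⬝ᵥ q) ≤ q ⬝ᵥ z := by have := hb q; rwa [hq] at this
  have h2 : (q ⬝ᵥ z)^2 ≤ (q ⬝ᵥ q) * (z ⬝ᵥ z) := dot_cs q z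
  have h3 : (0:ℝ) ≤ q ⬝ᵥ q := dot_self_nonneg' q
  have h4 : (0:ℝ) ≤ z ⬝ᵥ z := dot_self_nonneg' z
  rw [dotProduct_comm]
  rcases eq_or_lt_of_le (le_trans (mul_nonneg hc.le h3) h1 : (0:ℝ) ≤ q ⬝ᵥ z) with h | h
  · rw [← h, mul_zero]; exact h4
  · nlinarith [mul_le_mul_of_nonneg_left h2 hc.le]

/-- Symmetric matrix quadratic-form symmetry. -/
lemma dot_symm {m : ℕ} {A : Matrix (Fin m) (Fin m) ℝ} (hA : Aᵀ = A) (x w : Fin m → ℝ) :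
    x ⬝ᵥ A *ᵥ w = w ⬝ᵥ A *ᵥ x := by
  rw [dotProduct_mulVec, ← mulVec_transpose, hA, dotProduct_comm]

lemma rayleigh_lb {m : ℕ} {A : Matrix (Fin m) (Fin m) ℝ} (hA : A.IsHermitian)
    (x : Fin m → ℝ) :
    (⨅ i, hA.eigenvalues i) * (x ⬝ᵥ x) ≤ x ⬝ᵥ A *ᵥ x := by
  set U : Matrix (Fin m) (Fin m) ℝ := (hA.eigenvectorUnitary : Matrix (Fin m) (Fin m) ℝ) with hU
  set μ := hA.eigenvalues with hμ
  have hsp : A = U * diagonal (RCLike.ofReal ∘ μ) * star U := hA.spectral_theorem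
  have hstar : star U = Uᵀ := rfl
  have hUU : U * Uᵀ = 1 := by
    have := (hA.eigenvectorUnitary).2
    rw [Matrix.mem_unitaryGroup_iff] at this
    exact this
  set c := Uᵀ *ᵥ x with hc
  have hdiag : (diagonal (RCLike.ofReal ∘ μ) : Matrix (Fin m) (Fin m) ℝ) = diagonal μ := by
    congr 1
  have h1 : x ⬝ᵥ A *ᵥ x = ∑ i, μ i * (c i)^2 := by
    rw [hsp, hstar, hdiag]
    rw [← mulVec_mulVec, ← mulVec_mulVec, dotProduct_mulVec, ← mulVec_transpose]
    simp only [← hc, mulVec_diagonal, dotProduct]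
    apply Finset.sum_congr rfl; intro i _; ring
  have h2 : x ⬝ᵥ x = ∑ i, (c i)^2 := by
    have : c ⬝ᵥ c = x ⬝ᵥ x := by
      rw [hc, mulVec_transpose, ← dotProduct_mulVec, ← mulVec_transpose, mulVec_mulVec,
        hUU, one_mulVec]
    rw [← this, dotProduct]
    apply Finset.sum_congr rfl; intro i _; ring
  rw [h1, h2, Finset.mul_sum]
  apply Finset.sum_le_sum
  intro i _
  have hbdd : BddBelow (Set.range μ) := (Set.finite_range μ).bddBelow
  exact mul_le_mul_of_nonneg_right (ciInf_le hbdd i) (sq_nonneg _)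

lemma sum_mulVec'_s7 {m L : ℕ} (M : Fin L → Matrix (Fin m) (Fin m) ℝ) (x : Fin m → ℝ) :
    (∑ ℓ, M ℓ) *ᵥ x = ∑ ℓ, M ℓ *ᵥ x := by
  ext i
  simp only [mulVec, dotProduct, Finset.sum_apply, Matrix.sum_apply, Finset.sum_mul]
  rw [Finset.sum_comm]

lemma dot_sum' {m L : ℕ} (x : Fin m → ℝ) (v : Fin L → Fin m → ℝ) :
    x ⬝ᵥ (∑ ℓ, v ℓ) = ∑ ℓ, x ⬝ᵥ v ℓ := by
  simp only [dotProduct, Finset.sum_apply, Finset.mul_sum]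
  exact Finset.sum_comm

lemma quad_sum {m L : ℕ} (K : Fin L → Matrix (Fin m) (Fin m) ℝ) (d : Fin L → ℝ) (x : Fin m → ℝ) :
    x ⬝ᵥ (∑ ℓ, d ℓ • K ℓ) *ᵥ x = ∑ ℓ, d ℓ * (x ⬝ᵥ (K ℓ) *ᵥ x) := by
  rw [sum_mulVec'_s7, dot_sum']
  refine Finset.sum_congr rfl fun ℓ _ => ?_
  rw [smul_mulVec, dotProduct_smul, smul_eq_mul]

lemma Ksum_transpose {m L : ℕ} (K : Fin L → Matrix (Fin m) (Fin m) ℝ) (hK : ∀ ℓ, (K ℓ).PosDef)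
    (d : Fin L → ℝ) : (∑ ℓ, d ℓ • K ℓ)ᵀ = ∑ ℓ, d ℓ • K ℓ := by
  rw [transpose_sum]
  refine Finset.sum_congr rfl fun ℓ _ => ?_
  rw [transpose_smul]
  congr 1
  have := (hK ℓ).1.eq
  rwa [conjTranspose_eq_transpose_of_trivial] at this

lemma Ksum_hermitian {m L : ℕ} (K : Fin L → Matrix (Fin m) (Fin m) ℝ) (hK : ∀ ℓ, (K ℓ).PosDef)
    (d : Fin L → ℝ) : (∑ ℓ, d ℓ • K ℓ).IsHermitian := by
  show _ᴴ = _
  rw [conjTranspose_eq_transpose_of_trivial]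
  exact Ksum_transpose K hK d

/-- Positive definiteness of a simplex combination of positive definite matrices. -/
lemma Ksum_posdef {m L : ℕ} (K : Fin L → Matrix (Fin m) (Fin m) ℝ) (hK : ∀ ℓ, (K ℓ).PosDef)
    (d : Fin L → ℝ) (hd : ∀ ℓ, 0 ≤ d ℓ) (hsum : (∑ ℓ, d ℓ) = 1) :
    (∑ ℓ, d ℓ • K ℓ).PosDef := by
  refine Matrix.PosDef.of_dotProduct_mulVec_pos (Ksum_hermitian K hK d) ?_
  intro x hx
  obtain ⟨ℓ0, hℓ0⟩ : ∃ ℓ, 0 < d ℓ := by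
    by_contra h
    push_neg at h
    have : (∑ ℓ, d ℓ) = 0 := le_antisymm (Finset.sum_nonpos fun ℓ _ => h ℓ)
      (Finset.sum_nonneg fun ℓ _ => hd ℓ)
    rw [hsum] at this; norm_num at this
  rw [star_trivial, quad_sum]
  refine Finset.sum_pos' (fun ℓ _ => mul_nonneg (hd ℓ) ?_) ⟨ℓ0, Finset.mem_univ _, ?_⟩
  · have := (hK ℓ).dotProduct_mulVec_pos hx
    rw [star_trivial] at this
    exact le_of_lt this
  · have := (hK ℓ0).dotProduct_mulVec_pos hx
    rw [star_trivial] at this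
    exact mul_pos hℓ0 this

/-- Solvability of linear systems with simplex-combination matrices. -/
lemma Ksum_solve {m L : ℕ} (K : Fin L → Matrix (Fin m) (Fin m) ℝ) (hK : ∀ ℓ, (K ℓ).PosDef)
    (d : Fin L → ℝ) (hd : ∀ ℓ, 0 ≤ d ℓ) (hsum : (∑ ℓ, d ℓ) = 1) (z : Fin m → ℝ) :
    ∃ q, (∑ ℓ, d ℓ • K ℓ) *ᵥ q = z := by
  have hdet : IsUnit (∑ ℓ, d ℓ • K ℓ).det :=
    isUnit_iff_ne_zero.2 (ne_of_gt (Ksum_posdef K hK d hd hsum).det_pos)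
  exact ⟨(∑ ℓ, d ℓ • K ℓ)⁻¹ *ᵥ z, by rw [mulVec_mulVec, mul_nonsing_inv _ hdet, one_mulVec]⟩

lemma quad_coeff_zero {S c : ℝ} (hc : 0 ≤ c) (h : ∀ t : ℝ, 0 ≤ -(t * S) + t^2 * c) : S = 0 := by
  by_contra hS
  have hc1 : (0:ℝ) < c + 1 := by linarith
  have hS2 : 0 < S^2 := by positivity
  have h1 := h (S / (2*(c+1)))
  have hk : S / (2*(c+1)) * S = S^2 / (2*(c+1)) := by ring
  have hk2 : (S / (2*(c+1)))^2 * c = S^2 * c / (4*(c+1)^2) := by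
    rw [div_pow]
    rw [div_mul_eq_mul_div]
    congr 1
    ring
  rw [hk, hk2] at h1
  have h2 : S^2 * c / (4*(c+1)^2) < S^2 / (2*(c+1)) := by
    rw [div_lt_div_iff₀ (by positivity) (by positivity)]
    nlinarith
  linarith

lemma small_le_zero {D c ε : ℝ} (hc : 0 ≤ c) (hε : 0 < ε)
    (h : ∀ t : ℝ, 0 < t → t ≤ ε → D ≤ t * c) : D ≤ 0 := by
  by_contra hD
  push_neg at hD
  have hmin : 0 < min ε (D/(c+1)) := lt_min hε (by positivity)
  have h1 := h _ hmin (min_le_left _ _)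
  have h2 : min ε (D/(c+1)) * c ≤ (D/(c+1)) * c :=
    mul_le_mul_of_nonneg_right (min_le_right _ _) hc
  have h3 : (D/(c+1)) * c < D := by
    rw [div_mul_eq_mul_div, div_lt_iff₀ (by linarith)]
    nlinarith
  linarith

end Helpers
/-- The conditions for `(w, d, b, u)` to be a P-stationary point with parameter `γ > 0`,
with explicitly given multipliers `(θ, α, lam)`. -/
def IsPStationaryWith {m L : ℕ} (K : Fin L → Matrix (Fin m) (Fin m) ℝ)
    (y : Fin m → ℝ) (C γ : ℝ)
    (w : Fin m → ℝ) (d : Fin L → ℝ) (b : ℝ) (u : Fin m → ℝ)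
    (θ : Fin L → ℝ) (α : ℝ) (lam : Fin m → ℝ) : Prop :=
  (∀ ℓ, 0 ≤ d ℓ) ∧
  (∑ ℓ, d ℓ) = 1 ∧
  (∀ ℓ, 0 ≤ θ ℓ) ∧
  (∀ ℓ, θ ℓ * d ℓ = 0) ∧
  u + (Matrix.diagonal y * ∑ ℓ, d ℓ • K ℓ).mulVec w + b • y = 1 ∧
  w + (Matrix.diagonal y).mulVec lam = 0 ∧
  (∀ ℓ, -(1 / 2) * (w ⬝ᵥ (K ℓ).mulVec w) + α - θ ℓ = 0) ∧
  y ⬝ᵥ lam = 0 ∧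
  ∀ v : Fin m → ℝ,
    C * l0pos u + (1 / (2 * γ)) * ∑ i, (u i - (u i - γ * lam i)) ^ 2 ≤
    C * l0pos v + (1 / (2 * γ)) * ∑ i, (v i - (u i - γ * lam i)) ^ 2

/-- `(w, d, b, u)` is a P-stationary point with parameter `γ > 0`. -/
def IsPStationary {m L : ℕ} (K : Fin L → Matrix (Fin m) (Fin m) ℝ)
    (y : Fin m → ℝ) (C γ : ℝ)
    (w : Fin m → ℝ) (d : Fin L → ℝ) (b : ℝ) (u : Fin m → ℝ) : Prop :=
  ∃ (θ : Fin L → ℝ) (α : ℝ) (lam : Fin m → ℝ),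
    IsPStationaryWith K y C γ w d b u θ α lam

/-- The smallest eigenvalue of a Hermitian (real symmetric) matrix; junk value `0`
if the matrix is not Hermitian. -/
noncomputable def lambdaMin {m : ℕ} (A : Matrix (Fin m) (Fin m) ℝ) : ℝ :=
  if hA : A.IsHermitian then ⨅ i, hA.eigenvalues i else 0

/-- Theorem 4, part 1: a global minimizer of the MKL-L₀/₁-SVM problem is a
P-stationary point for every `0 < γ < C₁`. -/
theorem stmt_7 (m L : ℕ) (hm : 1 ≤ m) (hL : 1 ≤ L)
    (y : Fin m → ℝ) (hy : ∀ i, y i = 1 ∨ y i = -1)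
    (K : Fin L → Matrix (Fin m) (Fin m) ℝ) (hK : ∀ ℓ, (K ℓ).PosDef)
    (C : ℝ) (hC : 0 < C)
    (Δ : Set (Fin L → ℝ)) (hΔ : Δ = {d | (∀ ℓ, 0 ≤ d ℓ) ∧ (∑ ℓ, d ℓ) = 1})
    (J : (Fin m → ℝ) × (Fin L → ℝ) × ℝ → ℝ)
    (hJ : ∀ (w : Fin m → ℝ) (d : Fin L → ℝ) (b : ℝ),
      J (w, d, b) =
        (1 / 2) * (w ⬝ᵥ (∑ ℓ, d ℓ • K ℓ).mulVec w) +
        C * l0pos (1 - (Matrix.diagonal y * ∑ ℓ, d ℓ • K ℓ).mulVec w - b • y))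
    (C₁ : ℝ) (hC₁pos : 0 < C₁)
    (hC₁ : IsLeast {r | ∃ d ∈ Δ, lambdaMin (∑ ℓ, d ℓ • K ℓ) = r} C₁)
    (wstar : Fin m → ℝ) (dstar : Fin L → ℝ) (bstar : ℝ)
    (hdstar : dstar ∈ Δ)
    (hmin : ∀ (w : Fin m → ℝ) (d : Fin L → ℝ) (b : ℝ), d ∈ Δ →
      J (wstar, dstar, bstar) ≤ J (w, d, b))
    (ustar : Fin m → ℝ)
    (hustar : ustar =
      1 - (Matrix.diagonal y * ∑ ℓ, dstar ℓ • K ℓ).mulVec wstar - bstar • y) :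
    ∀ γ : ℝ, 0 < γ → γ < C₁ →
      IsPStationary K y C γ wstar dstar bstar ustar := by
  intro γ hγ0 hγ1
  subst hΔ
  obtain ⟨hd0, hd1⟩ := hdstar
  -- Rayleigh-type lower bound on the quadratic forms, uniform over the simplex
  have hray : ∀ d : Fin L → ℝ, (∀ ℓ, 0 ≤ d ℓ) → (∑ ℓ, d ℓ) = 1 →
      ∀ x : Fin m → ℝ, C₁ * (x ⬝ᵥ x) ≤ x ⬝ᵥ (∑ ℓ, d ℓ • K ℓ) *ᵥ x := by
    intro d h1 h2 x
    have hherm := Ksum_hermitian K hK d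
    have hle : C₁ ≤ ⨅ i, hherm.eigenvalues i := by
      have := hC₁.2 ⟨d, ⟨h1, h2⟩, rfl⟩
      rwa [lambdaMin, dif_pos hherm] at this
    calc C₁ * (x ⬝ᵥ x) ≤ (⨅ i, hherm.eigenvalues i) * (x ⬝ᵥ x) :=
          mul_le_mul_of_nonneg_right hle (dot_self_nonneg' x)
      _ ≤ _ := rayleigh_lb hherm x
  have hsolve : ∀ d : Fin L → ℝ, (∀ ℓ, 0 ≤ d ℓ) → (∑ ℓ, d ℓ) = 1 →
      ∀ z : Fin m → ℝ, ∃ q, (∑ ℓ, d ℓ • K ℓ) *ᵥ q = z := fun d h1 h2 =>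
    Ksum_solve K hK d h1 h2
  have hsymm : ∀ d : Fin L → ℝ, (∑ ℓ, d ℓ • K ℓ)ᵀ = ∑ ℓ, d ℓ • K ℓ := Ksum_transpose K hK
  -- The basic comparison inequality coming from global minimality
  have hJcmp : ∀ (w : Fin m → ℝ) (d : Fin L → ℝ) (b : ℝ), (∀ ℓ, 0 ≤ d ℓ) → (∑ ℓ, d ℓ) = 1 →
      (1/2) * (wstar ⬝ᵥ (∑ ℓ, dstar ℓ • K ℓ) *ᵥ wstar) + C * l0pos ustar ≤
      (1/2) * (w ⬝ᵥ (∑ ℓ, d ℓ • K ℓ) *ᵥ w) +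
        C * l0pos (1 - (Matrix.diagonal y * ∑ ℓ, d ℓ • K ℓ) *ᵥ w - b • y) := by
    intro w d b h1 h2
    have h := hmin w d b ⟨h1, h2⟩
    rw [hJ wstar dstar bstar, hJ w d b, ← hustar] at h
    exact h
  -- KEY b : the components of wstar sum to zero
  obtain ⟨q1, hq1⟩ := hsolve dstar hd0 hd1 (fun _ => (1:ℝ))
  have hSzero : (∑ i, wstar i) = 0 := by
    have hDy1 : (Matrix.diagonal y) *ᵥ (fun _ => (1:ℝ)) = y := by
      ext i; simp [mulVec_diagonal]
    have hv : ∀ t : ℝ,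
        1 - (Matrix.diagonal y * ∑ ℓ, dstar ℓ • K ℓ) *ᵥ (wstar - t • q1) - (bstar + t) • y
          = ustar := by
      intro t
      have hstep : (Matrix.diagonal y * ∑ ℓ, dstar ℓ • K ℓ) *ᵥ (wstar - t • q1)
          = (Matrix.diagonal y * ∑ ℓ, dstar ℓ • K ℓ) *ᵥ wstar - t • y := by
        rw [mulVec_sub, mulVec_smul]
        congr 1
        congr 1
        rw [← mulVec_mulVec, hq1, hDy1]
      rw [hstep, hustar]
      ext i
      simp only [Pi.sub_apply, Pi.add_apply, Pi.smul_apply, Pi.one_apply, smul_eq_mul]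
      ring
    have e1 : wstar ⬝ᵥ (∑ ℓ, dstar ℓ • K ℓ) *ᵥ q1 = ∑ i, wstar i := by
      rw [hq1]; simp [dotProduct]
    have e2 : q1 ⬝ᵥ (∑ ℓ, dstar ℓ • K ℓ) *ᵥ wstar = ∑ i, wstar i := by
      rw [dot_symm (hsymm dstar)]; exact e1
    have e3 : q1 ⬝ᵥ (∑ ℓ, dstar ℓ • K ℓ) *ᵥ q1 = ∑ i, q1 i := by
      rw [hq1]; simp [dotProduct]
    have hc0 : (0:ℝ) ≤ ∑ i, q1 i := by
      rw [← e3]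
      exact le_trans (mul_nonneg hC₁pos.le (dot_self_nonneg' q1)) (hray dstar hd0 hd1 q1)
    have hkey : ∀ t : ℝ, 0 ≤ -(t * (2 * ∑ i, wstar i)) + t^2 * (∑ i, q1 i) := by
      intro t
      have h := hJcmp (wstar - t • q1) dstar (bstar + t) hd0 hd1
      rw [hv t] at h
      have hexp : (wstar - t • q1) ⬝ᵥ (∑ ℓ, dstar ℓ • K ℓ) *ᵥ (wstar - t • q1)
          = wstar ⬝ᵥ (∑ ℓ, dstar ℓ • K ℓ) *ᵥ wstar
            - t * (wstar ⬝ᵥ (∑ ℓ, dstar ℓ • K ℓ) *ᵥ q1)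
            - t * (q1 ⬝ᵥ (∑ ℓ, dstar ℓ • K ℓ) *ᵥ wstar)
            + t * (t * (q1 ⬝ᵥ (∑ ℓ, dstar ℓ • K ℓ) *ᵥ q1)) := by
        simp only [mulVec_sub, mulVec_smul, dotProduct_sub, sub_dotProduct, dotProduct_smul,
          smul_dotProduct, smul_eq_mul]
        ring
      rw [hexp, e1, e2, e3] at h
      nlinarith [h]
    have := quad_coeff_zero hc0 hkey
    linarith
  -- KEY d : on the support of dstar the quadratic forms are maximal
  have hKEYd : ∀ ℓ ℓ0 : Fin L, 0 < dstar ℓ0 →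
      wstar ⬝ᵥ (K ℓ) *ᵥ wstar ≤ wstar ⬝ᵥ (K ℓ0) *ᵥ wstar := by
    intro ℓ ℓ0 hℓ0
    rcases eq_or_ne ℓ ℓ0 with rfl | hne
    · exact le_refl _
    have hczB : (0:ℝ) ≤ (((K ℓ) *ᵥ wstar - (K ℓ0) *ᵥ wstar) ⬝ᵥ
        ((K ℓ) *ᵥ wstar - (K ℓ0) *ᵥ wstar)) / C₁ :=
      div_nonneg (dot_self_nonneg' _) hC₁pos.le
    have hstep : ∀ t : ℝ, 0 < t → t ≤ dstar ℓ0 →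
        wstar ⬝ᵥ (K ℓ) *ᵥ wstar - wstar ⬝ᵥ (K ℓ0) *ᵥ wstar ≤
          t * ((((K ℓ) *ᵥ wstar - (K ℓ0) *ᵥ wstar) ⬝ᵥ
            ((K ℓ) *ᵥ wstar - (K ℓ0) *ᵥ wstar)) / C₁) := by
      intro t ht htle
      set zB : Fin m → ℝ := (K ℓ) *ᵥ wstar - (K ℓ0) *ᵥ wstar with hzB
      set dt : Fin L → ℝ :=
        fun j => dstar j + (if j = ℓ then t else 0) - (if j = ℓ0 then t else 0) with hdt
      have hdt0 : ∀ j, 0 ≤ dt j := by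
        intro j
        simp only [hdt]
        have hj := hd0 j
        split_ifs with ha hb hb
        · exact absurd (ha.symm.trans hb) hne
        · linarith
        · subst hb; linarith
        · linarith
      have hdt1 : (∑ j, dt j) = 1 := by
        simp only [hdt]
        rw [Finset.sum_sub_distrib, Finset.sum_add_distrib]
        rw [Finset.sum_ite_eq' Finset.univ ℓ (fun _ => t),
          Finset.sum_ite_eq' Finset.univ ℓ0 (fun _ => t)]
        simp [hd1]
      have hMt : (∑ j, dt j • K j) = (∑ j, dstar j • K j) + t • K ℓ - t • K ℓ0 := by
        simp only [hdt]
        have : ∀ j, (dstar j + (if j = ℓ then t else 0) - (if j = ℓ0 then t else 0)) • K j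
            = dstar j • K j + (if j = ℓ then t • K j else 0) - (if j = ℓ0 then t • K j else 0) := by
          intro j
          simp only [sub_smul, add_smul, ite_smul, zero_smul]
        simp only [this]
        rw [Finset.sum_sub_distrib, Finset.sum_add_distrib]
        rw [Finset.sum_ite_eq' Finset.univ ℓ (fun j => t • K j),
          Finset.sum_ite_eq' Finset.univ ℓ0 (fun j => t • K j)]
        simp
      obtain ⟨wt, hwt⟩ := hsolve dt hdt0 hdt1 ((∑ j, dstar j • K j) *ᵥ wstar)
      have hut : 1 - (Matrix.diagonal y * ∑ j, dt j • K j) *ᵥ wt - bstar • y = ustar := by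
        rw [hustar]
        have : (Matrix.diagonal y * ∑ j, dt j • K j) *ᵥ wt
            = (Matrix.diagonal y * ∑ j, dstar j • K j) *ᵥ wstar := by
          rw [← mulVec_mulVec, ← mulVec_mulVec, hwt]
        rw [this]
      have h := hJcmp wt dt bstar hdt0 hdt1
      rw [hut] at h
      have hcomp : wstar ⬝ᵥ (∑ j, dstar j • K j) *ᵥ wstar ≤ wt ⬝ᵥ (∑ j, dt j • K j) *ᵥ wt := by
        linarith
      have hMe : (∑ j, dt j • K j) *ᵥ (wstar - wt) = t • zB := by
        rw [mulVec_sub, hwt, hMt, sub_mulVec, add_mulVec, smul_mulVec, smul_mulVec,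
          hzB, smul_sub]
        abel
      have hsym1 : wt ⬝ᵥ (∑ j, dt j • K j) *ᵥ wstar = wstar ⬝ᵥ (∑ j, dstar j • K j) *ᵥ wstar := by
        rw [dot_symm (hsymm dt), hwt]
      have hid : (wstar - wt) ⬝ᵥ (∑ j, dt j • K j) *ᵥ (wstar - wt)
          = wstar ⬝ᵥ (∑ j, dt j • K j) *ᵥ wstar
            - 2 * (wstar ⬝ᵥ (∑ j, dstar j • K j) *ᵥ wstar)
            + wt ⬝ᵥ (∑ j, dstar j • K j) *ᵥ wstar := by
        rw [mulVec_sub, hwt, dotProduct_sub, sub_dotProduct, sub_dotProduct, hsym1]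
        ring
      have hqMt : wstar ⬝ᵥ (∑ j, dt j • K j) *ᵥ wstar
          = wstar ⬝ᵥ (∑ j, dstar j • K j) *ᵥ wstar
            + t * (wstar ⬝ᵥ (K ℓ) *ᵥ wstar) - t * (wstar ⬝ᵥ (K ℓ0) *ᵥ wstar) := by
        rw [hMt, sub_mulVec, add_mulVec, smul_mulVec, smul_mulVec, dotProduct_sub,
          dotProduct_add, dotProduct_smul, dotProduct_smul, smul_eq_mul, smul_eq_mul]
      have hbound : (wstar - wt) ⬝ᵥ (∑ j, dt j • K j) *ᵥ (wstar - wt)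
          ≤ t^2 * ((zB ⬝ᵥ zB) / C₁) := by
        have hkb := key_bound hC₁pos (hray dt hdt0 hdt1) hMe
        have hdot : (wstar - wt) ⬝ᵥ (∑ j, dt j • K j) *ᵥ (wstar - wt)
            = (t • zB) ⬝ᵥ (wstar - wt) := by
          rw [hMe, dotProduct_comm]
        have h2 : (t • zB) ⬝ᵥ (t • zB) = t^2 * (zB ⬝ᵥ zB) := by
          rw [smul_dotProduct, dotProduct_smul, smul_eq_mul, smul_eq_mul]
          ring
        rw [hdot, mul_div_assoc']
        rw [le_div_iff₀ hC₁pos]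
        calc ((t • zB) ⬝ᵥ (wstar - wt)) * C₁ = C₁ * ((t • zB) ⬝ᵥ (wstar - wt)) := by ring
          _ ≤ (t • zB) ⬝ᵥ (t • zB) := hkb
          _ = t^2 * (zB ⬝ᵥ zB) := h2
      -- combine
      have hfin : t * (wstar ⬝ᵥ (K ℓ) *ᵥ wstar - wstar ⬝ᵥ (K ℓ0) *ᵥ wstar)
          ≤ t * (t * ((zB ⬝ᵥ zB) / C₁)) := by
        have h4 : wt ⬝ᵥ (∑ j, dt j • K j) *ᵥ wt = wt ⬝ᵥ (∑ j, dstar j • K j) *ᵥ wstar := by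
          rw [hwt]
        nlinarith [hcomp, hid, hqMt, hbound, h4]
      have := le_of_mul_le_mul_left hfin ht
      linarith
    have := small_le_zero hczB hℓ0 hstep
    linarith
  -- multipliers
  set lam : Fin m → ℝ := fun i => -(y i * wstar i) with hlam
  set alp : ℝ := (1/2) * (wstar ⬝ᵥ (∑ j, dstar j • K j) *ᵥ wstar) with halp
  set θ : Fin L → ℝ := fun ℓ => alp - (1/2) * (wstar ⬝ᵥ (K ℓ) *ᵥ wstar) with hθ
  have hqd : wstar ⬝ᵥ (∑ j, dstar j • K j) *ᵥ wstar
      = ∑ j, dstar j * (wstar ⬝ᵥ (K j) *ᵥ wstar) := quad_sum K dstar wstar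
  refine ⟨θ, alp, lam, hd0, hd1, ?_, ?_, ?_, ?_, ?_, ?_, ?_⟩
  · -- θ nonneg
    intro ℓ
    simp only [hθ, halp]
    have h1 : wstar ⬝ᵥ (K ℓ) *ᵥ wstar = ∑ j, dstar j * (wstar ⬝ᵥ (K ℓ) *ᵥ wstar) := by
      rw [← Finset.sum_mul, hd1, one_mul]
    have h2 : ∑ j, dstar j * (wstar ⬝ᵥ (K ℓ) *ᵥ wstar)
        ≤ ∑ j, dstar j * (wstar ⬝ᵥ (K j) *ᵥ wstar) := by
      refine Finset.sum_le_sum fun j _ => ?_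
      rcases (hd0 j).eq_or_lt with hj | hj
      · rw [← hj]; simp
      · exact mul_le_mul_of_nonneg_left (hKEYd ℓ j hj) (hd0 j)
    rw [hqd]
    linarith
  · -- θ ℓ * dstar ℓ = 0
    intro ℓ
    rcases (hd0 ℓ).eq_or_lt with h | h
    · rw [← h, mul_zero]
    · have hconst : ∑ j, dstar j * (wstar ⬝ᵥ (K j) *ᵥ wstar)
          = ∑ j, dstar j * (wstar ⬝ᵥ (K ℓ) *ᵥ wstar) := by
        refine Finset.sum_congr rfl fun j _ => ?_
        rcases (hd0 j).eq_or_lt with hj | hj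
        · rw [← hj]; simp
        · rw [le_antisymm (hKEYd j ℓ h) (hKEYd ℓ j hj)]
      have hz : θ ℓ = 0 := by
        simp only [hθ, halp]
        rw [hqd, hconst, ← Finset.sum_mul, hd1]
        ring
      rw [hz, zero_mul]
  · -- primal feasibility
    rw [hustar]
    ext i
    simp only [Pi.add_apply, Pi.sub_apply, Pi.one_apply, Pi.smul_apply, smul_eq_mul]
    ring
  · -- w + D_y lam = 0
    ext i
    simp only [hlam, Pi.add_apply, Pi.zero_apply, mulVec_diagonal]
    rcases hy i with h | h <;> rw [h] <;> ring
  · -- stationarity in d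
    intro ℓ
    simp only [hθ]
    ring
  · -- y ⬝ lam = 0
    have h1 : y ⬝ᵥ lam = ∑ i, -(wstar i) := by
      rw [dotProduct]
      refine Finset.sum_congr rfl fun i _ => ?_
      simp only [hlam]
      rcases hy i with h | h <;> rw [h] <;> ring
    rw [h1, Finset.sum_neg_distrib, hSzero, neg_zero]
  · -- the proximal condition
    intro v
    set p : Fin m → ℝ := fun i => y i * (ustar i - v i) with hp
    obtain ⟨qv, hqv⟩ := hsolve dstar hd0 hd1 p
    have hu' : 1 - (Matrix.diagonal y * ∑ ℓ, dstar ℓ • K ℓ) *ᵥ (wstar + qv) - bstar • y = v := by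
      have hDyp : (Matrix.diagonal y) *ᵥ p = fun i => ustar i - v i := by
        ext i
        simp only [hp, mulVec_diagonal]
        rcases hy i with h | h <;> rw [h] <;> ring
      rw [mulVec_add, ← mulVec_mulVec (v := qv), hqv, hDyp, hustar]
      ext i
      simp only [Pi.sub_apply, Pi.add_apply, Pi.one_apply, Pi.smul_apply, smul_eq_mul]
      ring
    have h := hJcmp (wstar + qv) dstar bstar hd0 hd1
    rw [hu'] at h
    have hWq : (wstar + qv) ⬝ᵥ (∑ ℓ, dstar ℓ • K ℓ) *ᵥ (wstar + qv)
        = wstar ⬝ᵥ (∑ ℓ, dstar ℓ • K ℓ) *ᵥ wstar + 2 * (wstar ⬝ᵥ p) + (p ⬝ᵥ qv) := by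
      rw [mulVec_add, hqv, dotProduct_add, add_dotProduct, add_dotProduct]
      have h1 : qv ⬝ᵥ (∑ ℓ, dstar ℓ • K ℓ) *ᵥ wstar = wstar ⬝ᵥ p := by
        rw [dot_symm (hsymm dstar), hqv]
      have h2 : qv ⬝ᵥ p = p ⬝ᵥ qv := dotProduct_comm _ _
      rw [h1, h2]
      ring
    rw [hWq] at h
    have hF : C * l0pos ustar ≤ C * l0pos v + (wstar ⬝ᵥ p) + (1/2) * (p ⬝ᵥ qv) := by
      linarith
    have hpq : (0:ℝ) ≤ p ⬝ᵥ qv := by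
      have h1 : p ⬝ᵥ qv = qv ⬝ᵥ (∑ ℓ, dstar ℓ • K ℓ) *ᵥ qv := by
        rw [← hqv, dotProduct_comm]
      rw [h1]
      exact le_trans (mul_nonneg hC₁pos.le (dot_self_nonneg' qv)) (hray dstar hd0 hd1 qv)
    have hbd : γ * (p ⬝ᵥ qv) ≤ p ⬝ᵥ p := by
      calc γ * (p ⬝ᵥ qv) ≤ C₁ * (p ⬝ᵥ qv) := mul_le_mul_of_nonneg_right hγ1.le hpq
        _ ≤ p ⬝ᵥ p := key_bound hC₁pos (hray dstar hd0 hd1) hqv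
    have h5 : (1/2) * (p ⬝ᵥ qv) ≤ (1/(2*γ)) * (p ⬝ᵥ p) := by
      have hpos : (0:ℝ) ≤ 1/(2*γ) := by positivity
      have hmul := mul_le_mul_of_nonneg_left hbd hpos
      have he : (1/(2*γ)) * (γ * (p ⬝ᵥ qv)) = (1/2) * (p ⬝ᵥ qv) := by
        field_simp
      rw [← he]
      exact hmul
    have hLsum : ∑ i, (ustar i - (ustar i - γ * lam i))^2 = γ^2 * ∑ i, (wstar i)^2 := by
      rw [Finset.mul_sum]
      refine Finset.sum_congr rfl fun i _ => ?_
      simp only [hlam]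
      rcases hy i with hyi | hyi <;> rw [hyi] <;> ring
    have hRsum : ∑ i, (v i - (ustar i - γ * lam i))^2
        = (p ⬝ᵥ p) + 2*γ*(wstar ⬝ᵥ p) + γ^2 * ∑ i, (wstar i)^2 := by
      rw [dotProduct, dotProduct, Finset.mul_sum, Finset.mul_sum, ← Finset.sum_add_distrib,
        ← Finset.sum_add_distrib]
      refine Finset.sum_congr rfl fun i _ => ?_
      simp only [hlam, hp]
      rcases hy i with hyi | hyi <;> rw [hyi] <;> ring
    rw [hLsum, hRsum]
    have hg : (1/(2*γ)) * ((p ⬝ᵥ p) + 2*γ*(wstar ⬝ᵥ p) + γ^2 * ∑ i, (wstar i)^2)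
        = (1/(2*γ)) * (p ⬝ᵥ p) + (wstar ⬝ᵥ p) + (1/(2*γ)) * (γ^2 * ∑ i, (wstar i)^2) := by
      field_simp
    rw [hg]
    linarith
end
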